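/- Let p be a prime, n ≥ 2 an integer, and γ1, γ2 integers with p dividing n - γ2 - 2 and n - γ1 - 1. Let R ⊆ ZMod (n+2) × ZMod p be an (n+2, p, n, (n-γ2-2)/p + γ2, 0, (n-γ1-1)/p + γ1, (n-γ2-2)/p, (n-γ1-1)/p)-PDPDS, and for i = 0, 1, …, p-1 let s_i be the number of elements of R whose second component equals i. Then for each i = 1, 2, …, ⌈(p-1)/2⌉, (p-1)·(∑_{j=0}^{p-1} s_j·s_{j-i}) + ∑_{j=0}^{p-1} s_j² = n², where the subscripts are computed modulo p. -/
import Mathlib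

open Finset

/-- The number of ordered pairs `(r1, r2) ∈ R × R` with `r1 ≠ r2` and `r1 - r2 = d`. -/
def diffCount {N m : ℕ} (R : Finset (ZMod N × ZMod m)) (d : ZMod N × ZMod m) : ℕ :=
  ((R ×ˢ R).filter (fun x => x.1 ≠ x.2 ∧ x.1 - x.2 = d)).card

/-- `R` is an `(N, p, k, λ1, λ2, λ3, μ1, μ2)` partial direct product difference set
in `ZMod N × ZMod p` relative to `ZMod N × {0}` and `{0} × ZMod p`. -/
def IsPDPDS (N p k : ℕ) (l1 l2 l3 m1 m2 : ℤ) (R : Finset (ZMod N × ZMod p)) : Prop :=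
  R.card = k ∧
  (∀ h : ZMod N, h ≠ 0 → h ≠ 1 → h ≠ -1 → (diffCount R (h, 0) : ℤ) = l1) ∧
  (∀ g : ZMod p, g ≠ 0 → (diffCount R (0, g) : ℤ) = l2) ∧
  (∀ h : ZMod N, h = 1 ∨ h = -1 → (diffCount R (h, 0) : ℤ) = l3) ∧
  (∀ (h : ZMod N) (g : ZMod p), h ≠ 0 → h ≠ 1 → h ≠ -1 → g ≠ 0 →
    (diffCount R (h, g) : ℤ) = m1) ∧
  (∀ (h : ZMod N) (g : ZMod p), h = 1 ∨ h = -1 → g ≠ 0 →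
    (diffCount R (h, g) : ℤ) = m2)

lemma sum_range_zmod' {M : Type*} [AddCommMonoid M] (p : ℕ) [NeZero p] (f : ZMod p → M) :
    ∑ j ∈ Finset.range p, f (j : ZMod p) = ∑ c : ZMod p, f c := by
  refine Finset.sum_nbij' (fun j => (j : ZMod p)) (fun c => c.val) (fun a _ => mem_univ _)
    (fun c _ => ?_) (fun a ha => ?_) (fun c _ => ZMod.natCast_rightInverse c) (fun a _ => rfl)
  · exact Finset.mem_range.2 (ZMod.val_lt c)
  · exact ZMod.val_cast_of_lt (Finset.mem_range.1 ha)

lemma key_count' {N p : ℕ} [NeZero N] [NeZero p] (R : Finset (ZMod N × ZMod p))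
    (g : ZMod p) (hg : g ≠ 0) :
    ∑ h : ZMod N, diffCount R (h, g) =
      ∑ c : ZMod p, (R.filter (fun x => x.2 = c)).card * (R.filter (fun x => x.2 = c - g)).card := by
  have hE : ∑ h : ZMod N, diffCount R (h, g) =
      ((R ×ˢ R).filter (fun x => x.1.2 - x.2.2 = g)).card := by
    rw [Finset.card_eq_sum_card_fiberwise (f := fun x => x.1.1 - x.2.1)
      (t := (Finset.univ : Finset (ZMod N))) (fun x _ => mem_univ _)]
    refine Finset.sum_congr rfl fun h _ => ?_
    unfold diffCount
    rw [Finset.filter_filter]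
    congr 1
    apply Finset.filter_congr
    intro x _
    constructor
    · rintro ⟨-, hx⟩
      rw [Prod.ext_iff] at hx
      simp only [Prod.fst_sub, Prod.snd_sub] at hx
      exact ⟨hx.2, hx.1⟩
    · rintro ⟨h2, h1⟩
      refine ⟨fun hxe => hg ?_, ?_⟩
      · rw [hxe] at h2; simpa using h2.symm
      · exact Prod.ext h1 h2
  rw [hE, Finset.card_eq_sum_card_fiberwise (f := fun x => x.1.2)
      (t := (Finset.univ : Finset (ZMod p))) (fun x _ => mem_univ _)]
  refine Finset.sum_congr rfl fun c _ => ?_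
  rw [Finset.filter_filter, ← Finset.card_product, ← Finset.filter_product]
  congr 1
  apply Finset.filter_congr
  intro x _
  constructor
  · rintro ⟨hs, hc⟩
    exact ⟨hc, by rw [← hc, eq_sub_iff_add_eq, ← eq_sub_iff_add_eq']; exact hs.symm⟩
  · rintro ⟨h1, h2⟩
    exact ⟨by rw [h1, h2]; ring, h1⟩

/-- Note: in ℕ, `⌈(p-1)/2⌉ = p / 2` for `p ≥ 1`. -/
theorem stmt11 (p n : ℕ) (hp : p.Prime) (hn : 2 ≤ n) (γ1 γ2 : ℤ)
    (hdvd2 : (p : ℤ) ∣ (n : ℤ) - γ2 - 2) (hdvd1 : (p : ℤ) ∣ (n : ℤ) - γ1 - 1)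
    (R : Finset (ZMod (n + 2) × ZMod p))
    (hPDPDS : IsPDPDS (n + 2) p n
      (((n : ℤ) - γ2 - 2) / p + γ2) 0 (((n : ℤ) - γ1 - 1) / p + γ1)
      (((n : ℤ) - γ2 - 2) / p) (((n : ℤ) - γ1 - 1) / p) R)
    (s : ZMod p → ℕ)
    (hs : ∀ c : ZMod p, s c = (R.filter (fun x => x.2 = c)).card) :
    ∀ i : ℕ, 1 ≤ i → i ≤ p / 2 →
      ((p : ℤ) - 1) *
          (∑ j ∈ Finset.range p, (s (j : ZMod p) : ℤ) * (s ((j : ZMod p) - (i : ZMod p)) : ℤ)) +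
        ∑ j ∈ Finset.range p, (s (j : ZMod p) : ℤ) ^ 2 = (n : ℤ) ^ 2 := by
  obtain ⟨hcard, hl1, hl2, hl3, hm1, hm2⟩ := hPDPDS
  haveI : NeZero p := ⟨hp.ne_zero⟩
  haveI : NeZero (n + 2) := ⟨by omega⟩
  intro i hi1 hi2
  have hp2 : 2 ≤ p := hp.two_le
  have hilt : i < p := lt_of_le_of_lt hi2 (Nat.div_lt_self (by omega) one_lt_two)
  have hine : (i : ZMod p) ≠ 0 := by
    rw [Ne, ZMod.natCast_eq_zero_iff]
    exact fun hd => absurd (Nat.le_of_dvd (by omega) hd) (by omega)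
  -- value of T g for g ≠ 0 is independent of g
  have e1 : ∀ g : ZMod p, g ≠ 0 →
      (∑ c : ZMod p, (s c : ℤ) * (s (c - g) : ℤ)) =
        ∑ h : ZMod (n + 2), (diffCount R (h, g) : ℤ) := by
    intro g hg
    have hnat : ∑ c : ZMod p, s c * s (c - g) = ∑ h : ZMod (n + 2), diffCount R (h, g) := by
      rw [key_count' R g hg]
      exact Finset.sum_congr rfl fun c _ => by rw [hs, hs]
    calc (∑ c : ZMod p, (s c : ℤ) * (s (c - g) : ℤ))
        = ((∑ c : ZMod p, s c * s (c - g) : ℕ) : ℤ) := by push_cast; rfl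
      _ = ((∑ h : ZMod (n + 2), diffCount R (h, g) : ℕ) : ℤ) := by rw [hnat]
      _ = ∑ h : ZMod (n + 2), (diffCount R (h, g) : ℤ) := by push_cast; rfl
  have hconst : ∀ g : ZMod p, g ≠ 0 →
      (∑ c : ZMod p, (s c : ℤ) * (s (c - g) : ℤ)) =
        ∑ c : ZMod p, (s c : ℤ) * (s (c - (i : ZMod p)) : ℤ) := by
    intro g hg
    rw [e1 g hg, e1 _ hine]
    refine Finset.sum_congr rfl fun h _ => ?_
    by_cases h0 : h = 0
    · subst h0; rw [hl2 g hg, hl2 _ hine]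
    by_cases h1 : h = 1 ∨ h = -1
    · rw [hm2 h g h1 hg, hm2 h _ h1 hine]
    · push_neg at h1
      rw [hm1 h g h0 h1.1 h1.2 hg, hm1 h _ h0 h1.1 h1.2 hine]
  -- total sum
  have hsumall : ∑ c : ZMod p, (s c : ℤ) = (n : ℤ) := by
    have : ∑ c : ZMod p, s c = R.card := by
      rw [Finset.card_eq_sum_card_fiberwise (f := fun x : ZMod (n + 2) × ZMod p => x.2)
        (t := (Finset.univ : Finset (ZMod p))) (fun x _ => mem_univ _)]
      exact Finset.sum_congr rfl fun c _ => hs c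
    rw [show ((n : ℤ)) = ((R.card : ℕ) : ℤ) by rw [hcard], ← this]
    push_cast; rfl
  have htot : ∑ g : ZMod p, ∑ c : ZMod p, (s c : ℤ) * (s (c - g) : ℤ) = (n : ℤ) ^ 2 := by
    rw [Finset.sum_comm]
    have hrow : ∀ c : ZMod p, ∑ g : ZMod p, (s (c - g) : ℤ) = (n : ℤ) := by
      intro c
      rw [← hsumall]
      exact Fintype.sum_bijective (fun g => c - g)
        (Function.Involutive.bijective fun g => by ring) _ _ (fun g => rfl)
    calc ∑ c : ZMod p, ∑ g : ZMod p, (s c : ℤ) * (s (c - g) : ℤ)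
        = ∑ c : ZMod p, (s c : ℤ) * ∑ g : ZMod p, (s (c - g) : ℤ) := by
          simp [Finset.mul_sum]
      _ = ∑ c : ZMod p, (s c : ℤ) * (n : ℤ) := by
          exact Finset.sum_congr rfl fun c _ => by rw [hrow c]
      _ = (n : ℤ) ^ 2 := by rw [← Finset.sum_mul, hsumall]; ring
  -- split off g = 0
  rw [← Finset.sum_erase_add _ _ (mem_univ (0 : ZMod p))] at htot
  have herase : ∑ g ∈ (Finset.univ : Finset (ZMod p)).erase 0,
      ∑ c : ZMod p, (s c : ℤ) * (s (c - g) : ℤ)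
      = ((p : ℤ) - 1) * ∑ c : ZMod p, (s c : ℤ) * (s (c - (i : ZMod p)) : ℤ) := by
    rw [Finset.sum_congr rfl (fun g hg => hconst g (Finset.ne_of_mem_erase hg)),
      Finset.sum_const, Finset.card_erase_of_mem (mem_univ _)]
    simp only [Finset.card_univ, ZMod.card, nsmul_eq_mul]
    congr 1
    push_cast [Nat.cast_sub hp.one_le]
    ring
  have hzero : ∑ c : ZMod p, (s c : ℤ) * (s (c - (0 : ZMod p)) : ℤ)
      = ∑ c : ZMod p, (s c : ℤ) ^ 2 := by
    refine Finset.sum_congr rfl fun c _ => ?_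
    rw [sub_zero]; ring
  rw [herase, hzero] at htot
  rw [sum_range_zmod' p (fun c => (s c : ℤ) * (s (c - (i : ZMod p)) : ℤ)),
    sum_range_zmod' p (fun c => (s c : ℤ) ^ 2)]
  exact htot
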